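/- Let p ≥ 5 be prime and let F_p = ⟨x, y : x^p = 1 = y^{p−1}, y^{−1}xy = x^r⟩ with r of multiplicative order p−1 mod p (so F_p ≅ Z_p ⋊ Z_{p−1} is the Frobenius group of order p(p−1)). Then ι(F_p) = 2. -/

import Mathlib

/-- The intersection number of a group: the minimum number of maximal subgroups
whose intersection equals the Frattini subgroup. -/
noncomputable def interNum (G : Type*) [Group G] : ℕ :=
  sInf {n | ∃ s : Finset (Subgroup G), s.card = n ∧ (∀ M ∈ s, IsCoatom M) ∧
    s.inf id = frattini G}

theorem interNum_frobenius (p : ℕ) (hp : p.Prime) (hp5 : 5 ≤ p)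
    (F : Type*) [Group F] [Finite F] (x y : F) (r : ℕ)
    (hr : ∃ u : (ZMod p)ˣ, (u : ZMod p) = (r : ZMod p) ∧ orderOf u = p - 1)
    (hx : orderOf x = p) (hy : orderOf y = p - 1)
    (hxy : y⁻¹ * x * y = x ^ r)
    (hgen : Subgroup.closure {x, y} = ⊤)
    (hcard : Nat.card F = p * (p - 1)) :
    interNum F = 2 := by
  obtain ⟨u, hu, hord⟩ := hr
  have hp2 : 2 ≤ p := hp.two_le
  have hx1 : x ≠ 1 := by
    intro h; rw [h, orderOf_one] at hx; omega
  set H : Subgroup F := Subgroup.zpowers y with hH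
  set N : Subgroup F := Subgroup.zpowers x with hN
  set K : Subgroup F := H.map ((MulAut.conj x : F ≃* F) : F →* F) with hK
  have hcardH : Nat.card H = p - 1 := by rw [hH, Nat.card_zpowers, hy]
  have hcardN : Nat.card N = p := by rw [hN, Nat.card_zpowers, hx]
  have hcardK : Nat.card K = p - 1 := by
    rw [hK, ← hcardH]
    exact (Nat.card_congr
      (Subgroup.equivMapOfInjective H _ (MulAut.conj x).injective).toEquiv).symm
  -- any subgroup of order p - 1 is maximal
  have hmax : ∀ M : Subgroup F, Nat.card M = p - 1 → IsCoatom M := by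
    intro M hM
    constructor
    · intro hMtop
      rw [hMtop, Subgroup.card_top, hcard] at hM
      have h1 : 1 * (p - 1) < p * (p - 1) :=
        mul_lt_mul_of_pos_right (by omega) (by omega)
      rw [hM, one_mul] at h1
      exact lt_irrefl _ h1
    · intro B hMB
      have h1 : Nat.card M ∣ Nat.card B := Subgroup.card_dvd_of_le hMB.le
      have h2 : Nat.card B ∣ Nat.card F := Subgroup.card_subgroup_dvd_card B
      obtain ⟨d, hd⟩ := hM ▸ h1
      have hdp : d ∣ p := by
        have hdd : (p - 1) * d ∣ (p - 1) * p := by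
          rw [← hd]; rw [hcard, mul_comm p (p - 1)] at h2; exact h2
        exact (Nat.mul_dvd_mul_iff_left (by omega : 0 < p - 1)).mp hdd
      rcases (Nat.Prime.eq_one_or_self_of_dvd hp d hdp) with h | h
      · exfalso
        have : Nat.card B ≤ Nat.card M := by rw [hM, hd, h, mul_one]
        exact hMB.ne (Subgroup.eq_of_le_of_card_ge hMB.le this)
      · apply Subgroup.eq_top_of_card_eq
        rw [hd, h, hcard, mul_comm]
  -- key commutation relation
  have key : ∀ k : ℕ, (y ^ k)⁻¹ * x * y ^ k = x ^ r ^ k := by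
    intro k
    induction k with
    | zero => simp
    | succ k ih =>
      have : (y ^ (k + 1))⁻¹ * x * y ^ (k + 1)
          = y⁻¹ * ((y ^ k)⁻¹ * x * y ^ k) * y := by
        rw [pow_succ, mul_inv_rev]; group
      rw [this, ih]
      have hc : y⁻¹ * x ^ r ^ k * y = (y⁻¹ * x * y) ^ r ^ k := by
        have := conj_pow (i := r ^ k) (a := y⁻¹) (b := x)
        simpa using this.symm
      rw [hc, hxy, ← pow_mul, pow_succ']
  have hNH : N ⊓ H = ⊥ := by
    apply Subgroup.inf_eq_bot_of_coprime
    rw [hcardN, hcardH]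
    have h : Nat.Coprime (1 + (p - 1)) (p - 1) :=
      Nat.coprime_add_self_left.mpr (Nat.coprime_one_left _)
    rwa [show 1 + (p - 1) = p by omega] at h
  -- trivial intersection
  have hHK : H ⊓ K = ⊥ := by
    rw [eq_bot_iff]
    rintro g ⟨hgH, hgK⟩
    obtain ⟨a, ha⟩ : ∃ a : ℕ, y ^ a = g :=
      (Submonoid.mem_powers_iff g y).mp (mem_powers_iff_mem_zpowers.mpr hgH)
    obtain ⟨h, hhH, hh⟩ := hgK
    have hh' : x⁻¹ * g * x ∈ H := by
      have : h = x⁻¹ * g * x := by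
        have : x * h * x⁻¹ = g := hh
        rw [← this]; group
      rwa [← this]
    have hzH : (x ^ r ^ a)⁻¹ * x ∈ H := by
      have h2 : (y ^ a)⁻¹ * (x⁻¹ * g * x) ∈ H :=
        H.mul_mem (H.inv_mem (H.pow_mem (Subgroup.mem_zpowers y) a)) hh'
      have h3 : (y ^ a)⁻¹ * (x⁻¹ * g * x) = (x ^ r ^ a)⁻¹ * x := by
        rw [← ha]
        have := key a
        calc (y ^ a)⁻¹ * (x⁻¹ * y ^ a * x)
            = ((y ^ a)⁻¹ * x⁻¹ * y ^ a) * x := by group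
          _ = ((y ^ a)⁻¹ * x * y ^ a)⁻¹ * x := by group
          _ = (x ^ r ^ a)⁻¹ * x := by rw [this]
      rwa [h3] at h2
    have hzN : (x ^ r ^ a)⁻¹ * x ∈ N := by
      exact N.mul_mem (N.inv_mem (N.pow_mem (Subgroup.mem_zpowers x) _))
        (Subgroup.mem_zpowers x)
    have hz1 : (x ^ r ^ a)⁻¹ * x = 1 := by
      have : (x ^ r ^ a)⁻¹ * x ∈ N ⊓ H := ⟨hzN, hzH⟩
      rwa [hNH, Subgroup.mem_bot] at this
    have hxx : x ^ r ^ a = x ^ 1 := by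
      rw [pow_one]
      exact inv_mul_eq_one.mp hz1
    have hmod : r ^ a ≡ 1 [MOD p] := by
      have := pow_eq_pow_iff_modEq.mp hxx
      rwa [hx] at this
    have hua : u ^ a = 1 := by
      have hcast : ((r ^ a : ℕ) : ZMod p) = ((1 : ℕ) : ZMod p) :=
        (ZMod.natCast_eq_natCast_iff _ _ _).mpr hmod
      push_cast at hcast
      ext
      push_cast
      rw [hu, hcast]
    have hdvd : p - 1 ∣ a := hord ▸ orderOf_dvd_of_pow_eq_one hua
    have : y ^ a = 1 := orderOf_dvd_iff_pow_eq_one.mp (hy ▸ hdvd)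
    rw [Subgroup.mem_bot, ← ha, this]
  have hfrat : frattini F = ⊥ := by
    rw [eq_bot_iff, ← hHK]
    exact le_inf (frattini_le_coatom (hmax H hcardH)) (frattini_le_coatom (hmax K hcardK))
  have hne : H ≠ K := by
    intro h
    have : y ∈ H ⊓ K := ⟨Subgroup.mem_zpowers y, h ▸ Subgroup.mem_zpowers y⟩
    rw [hHK, Subgroup.mem_bot] at this
    rw [this, orderOf_one] at hy; omega
  classical
  have h2mem : 2 ∈ {n | ∃ s : Finset (Subgroup F), s.card = n ∧ (∀ M ∈ s, IsCoatom M) ∧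
      s.inf id = frattini F} := by
    refine ⟨{H, K}, ?_, ?_, ?_⟩
    · rw [Finset.card_insert_of_notMem (by simpa using hne), Finset.card_singleton]
    · intro M hM
      rcases Finset.mem_insert.mp hM with h | h
      · exact h ▸ hmax H hcardH
      · exact (Finset.mem_singleton.mp h) ▸ hmax K hcardK
    · rw [hfrat, ← hHK]; simp
  unfold interNum
  refine le_antisymm (Nat.sInf_le h2mem) (le_csInf ⟨2, h2mem⟩ ?_)
  rintro n ⟨s, hs, hcoat, hinf⟩
  by_contra hlt
  push_neg at hlt
  interval_cases n
  · rw [Finset.card_eq_zero] at hs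
    rw [hs, Finset.inf_empty, hfrat] at hinf
    have : x ∈ (⊥ : Subgroup F) := hinf ▸ Subgroup.mem_top x
    exact hx1 (Subgroup.mem_bot.mp this)
  · obtain ⟨M, rfl⟩ := Finset.card_eq_one.mp hs
    rw [Finset.inf_singleton, hfrat] at hinf
    simp only [id_eq] at hinf
    have hco : IsCoatom (⊥ : Subgroup F) := by
      have := hcoat M (Finset.mem_singleton_self M)
      rwa [hinf] at this
    have hNne : (⊥ : Subgroup F) < N := by
      rw [bot_lt_iff_ne_bot]
      intro h
      exact hx1 (Subgroup.mem_bot.mp (h ▸ Subgroup.mem_zpowers x))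
    have hNtop := hco.2 N hNne
    rw [hNtop, Subgroup.card_top, hcard, mul_comm] at hcardN
    have h1 : 1 * p < (p - 1) * p :=
      mul_lt_mul_of_pos_right (by omega) (by omega)
    rw [hcardN, one_mul] at h1
    exact lt_irrefl _ h1
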